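/- Let u, v ≥ 3 be coprime integers, let r' = (r'0,r'1,r'2) be an affine sl3 weight of level u−3 and s' = (s'0,s'1,s'2) one of level v−3, both with all components nonnegative. Let j' be real, κ = u/(3v) − 1/2, ξ = −2πi·(u/v)·(s̄'+ρ), X1 = exp(⟨ω2,ξ⟩), X2 = exp(⟨ω1−ω2,ξ⟩), X3 = exp(⟨−ω1,ξ⟩), and x = −exp(2πi(⟨r̄'+ρ, ω2⟩ − (j'−κ))). For i = 0,1,2 set c_i = (j'−κ) − j^tw(σ^i(r',s')) and assume sin(π·c_i) ≠ 0. Then Σ_{m=0}^{v−3} x^m·h_m(X1,X2,X3) = (1 − exp(−2πi·v·(j'−κ))·exp(2πi·v·j^tw(r',s'))) · exp(3πi(j'−κ)) / (8·sin(π c_0)·sin(π c_1)·sin(π c_2)). -/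

import Mathlib

noncomputable section

open Complex

/-- The complete homogeneous symmetric polynomial of degree `m` in three variables. -/
def hsym (m : ℕ) (X1 X2 X3 : ℂ) : ℂ :=
  ∑ a ∈ Finset.range (m + 1), ∑ b ∈ Finset.range (m + 1 - a),
    X1 ^ a * X2 ^ b * X3 ^ (m - a - b)

/-- The bilinear form on the sl₃ weight plane in Dynkin-label coordinates. -/
def form (a b : ℂ × ℂ) : ℂ :=
  (2 * a.1 * b.1 + a.1 * b.2 + a.2 * b.1 + 2 * a.2 * b.2) / 3

/-- The Weyl vector of sl₃. -/
def rho : ℂ × ℂ := (1, 1)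

/-- The first fundamental weight of sl₃. -/
def om1 : ℂ × ℂ := (1, 0)

/-- The second fundamental weight of sl₃. -/
def om2 : ℂ × ℂ := (0, 1)

/-- The twisted charge `j^tw(r,s) = (r1−r2)/3 − (u/(3v))·(s1−s2) − 1/2`, as a function of
the four relevant Dynkin labels of the pair `(r,s)` of affine sl₃ weights. -/
def jtw (u v : ℕ) (r1 r2 s1 s2 : ℤ) : ℝ :=
  ((r1 : ℝ) - (r2 : ℝ)) / 3 - ((u : ℝ) / (3 * (v : ℝ))) * ((s1 : ℝ) - (s2 : ℝ)) - 1 / 2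

/- ===================  Auxiliary lemmas =================== -/

lemma hsym_zero (X1 X2 X3 : ℂ) : hsym 0 X1 X2 X3 = 1 := by
  simp [hsym]

lemma hsym_succ (m : ℕ) (X1 X2 X3 : ℂ) :
    hsym (m+1) X1 X2 X3 = X1 * hsym m X1 X2 X3 +
      ∑ b ∈ Finset.range (m + 2), X2 ^ b * X3 ^ (m + 1 - b) := by
  rw [hsym, Finset.sum_range_succ']
  congr 1
  · rw [hsym, Finset.mul_sum]
    refine Finset.sum_congr rfl fun a ha => ?_
    rw [Finset.mul_sum]
    have h1 : m + 1 + 1 - (a + 1) = m + 1 - a := by omega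
    rw [h1]
    refine Finset.sum_congr rfl fun b hb => ?_
    have h2 : m + 1 - (a + 1) - b = m - a - b := by omega
    rw [h2]; ring
  · simp

lemma two_var (n : ℕ) (X2 X3 : ℂ) :
    (∑ b ∈ Finset.range (n + 1), X2 ^ b * X3 ^ (n - b)) * (X2 - X3)
      = X2 ^ (n+1) - X3 ^ (n+1) := by
  have := geom_sum₂_mul X2 X3 (n+1)
  simpa using this

lemma hsym_vandermonde (m : ℕ) (q1 q2 q3 : ℂ) :
    hsym m q1 q2 q3 * ((q1 - q2) * (q1 - q3) * (q2 - q3)) =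
      q1 ^ (m+2) * (q2 - q3) - q2 ^ (m+2) * (q1 - q3) + q3 ^ (m+2) * (q1 - q2) := by
  induction m with
  | zero => rw [hsym_zero]; ring
  | succ m ih =>
      rw [hsym_succ]
      have h2 := two_var (m+1) q2 q3
      calc (q1 * hsym m q1 q2 q3 + ∑ b ∈ Finset.range (m + 2), q2 ^ b * q3 ^ (m + 1 - b)) *
            ((q1 - q2) * (q1 - q3) * (q2 - q3))
          = q1 * (hsym m q1 q2 q3 * ((q1 - q2) * (q1 - q3) * (q2 - q3))) +
            ((∑ b ∈ Finset.range (m + 2), q2 ^ b * q3 ^ (m + 1 - b)) * (q2 - q3)) *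
              ((q1 - q2) * (q1 - q3)) := by ring
        _ = q1 ^ (m+1+2) * (q2 - q3) - q2 ^ (m+1+2) * (q1 - q3) + q3 ^ (m+1+2) * (q1 - q2) := by
            rw [ih, h2]; ring

lemma sum_hsym_eq (N : ℕ) (q1 q2 q3 P : ℂ)
    (h1 : q1 ^ (N + 3) = P) (h2 : q2 ^ (N + 3) = P) (h3 : q3 ^ (N + 3) = P)
    (hd12 : q1 ≠ q2) (hd13 : q1 ≠ q3) (hd23 : q2 ≠ q3)
    (e1 : (1:ℂ) - q1 ≠ 0) (e2 : (1:ℂ) - q2 ≠ 0) (e3 : (1:ℂ) - q3 ≠ 0) :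
    ∑ m ∈ Finset.range (N + 1), hsym m q1 q2 q3 =
      (1 - P) / ((1 - q1) * (1 - q2) * (1 - q3)) := by
  have hV : (q1 - q2) * (q1 - q3) * (q2 - q3) ≠ 0 := by
    apply mul_ne_zero (mul_ne_zero (sub_ne_zero.mpr hd12) (sub_ne_zero.mpr hd13))
      (sub_ne_zero.mpr hd23)
  have hD : (1 - q1) * (1 - q2) * (1 - q3) ≠ 0 := mul_ne_zero (mul_ne_zero e1 e2) e3
  rw [eq_div_iff hD]
  apply mul_right_cancel₀ hV
  have gs : ∀ q : ℂ, q ^ (N+3) = P →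
      (∑ m ∈ Finset.range (N + 1), q ^ (m+2)) * (1 - q) = q ^ 2 - P := by
    intro q hq
    have hg := geom_sum_mul q (N+1)
    have hsq : (∑ m ∈ Finset.range (N + 1), q ^ (m+2))
        = q^2 * ∑ m ∈ Finset.range (N+1), q^m := by
      rw [Finset.mul_sum]
      exact Finset.sum_congr rfl fun m _ => by ring
    rw [hsq]
    calc q^2 * (∑ m ∈ Finset.range (N+1), q^m) * (1 - q)
        = -(q^2 * ((∑ m ∈ Finset.range (N+1), q^m) * (q - 1))) := by ring
      _ = -(q^2 * (q^(N+1) - 1)) := by rw [hg]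
      _ = q^2 - q^(N+3) := by ring
      _ = q^2 - P := by rw [hq]
  have G1 := gs q1 h1
  have G2 := gs q2 h2
  have G3 := gs q3 h3
  have hS : (∑ m ∈ Finset.range (N + 1), hsym m q1 q2 q3) * ((q1 - q2) * (q1 - q3) * (q2 - q3))
      = (∑ m ∈ Finset.range (N + 1), q1 ^ (m+2)) * (q2 - q3)
        - (∑ m ∈ Finset.range (N + 1), q2 ^ (m+2)) * (q1 - q3)
        + (∑ m ∈ Finset.range (N + 1), q3 ^ (m+2)) * (q1 - q2) := by
    rw [Finset.sum_mul, Finset.sum_mul, Finset.sum_mul, Finset.sum_mul,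
      ← Finset.sum_sub_distrib, ← Finset.sum_add_distrib]
    exact Finset.sum_congr rfl fun m _ => hsym_vandermonde m q1 q2 q3
  calc (∑ m ∈ Finset.range (N + 1), hsym m q1 q2 q3) * ((1 - q1) * (1 - q2) * (1 - q3)) *
        ((q1 - q2) * (q1 - q3) * (q2 - q3))
      = ((∑ m ∈ Finset.range (N + 1), hsym m q1 q2 q3) * ((q1 - q2) * (q1 - q3) * (q2 - q3))) *
        ((1 - q1) * (1 - q2) * (1 - q3)) := by ring
    _ = (1 - P) * ((q1 - q2) * (q1 - q3) * (q2 - q3)) := by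
        rw [hS]
        linear_combination ((q2-q3)*(1-q2)*(1-q3)) * G1 - ((q1-q3)*(1-q1)*(1-q3)) * G2
          + ((q1-q2)*(1-q1)*(1-q2)) * G3

lemma hsym_smul (m : ℕ) (x X1 X2 X3 : ℂ) :
    x ^ m * hsym m X1 X2 X3 = hsym m (x*X1) (x*X2) (x*X3) := by
  rw [hsym, hsym, Finset.mul_sum]
  refine Finset.sum_congr rfl fun a ha => ?_
  rw [Finset.mul_sum]
  refine Finset.sum_congr rfl fun b hb => ?_
  simp only [Finset.mem_range] at ha hb
  have hm : a + b + (m - a - b) = m := by omega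
  have hx : x ^ m = x ^ a * x ^ b * x ^ (m - a - b) := by
    rw [← pow_add, ← pow_add, hm]
  rw [hx, mul_pow, mul_pow, mul_pow]
  ring

lemma sin_fac (c : ℝ) : ((Real.sin (Real.pi * c) : ℝ) : ℂ) =
    Complex.I / 2 * (Complex.exp (-(2 * (Real.pi:ℂ) * Complex.I) * c) - 1) *
      Complex.exp ((Real.pi:ℂ) * Complex.I * c) := by
  rw [Complex.ofReal_sin, Complex.sin]
  push_cast
  rw [show -(((Real.pi:ℂ)) * c) * I = (-(2 * (Real.pi:ℂ) * I) * c) + (Real.pi:ℂ) * I * c by ring,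
    Complex.exp_add,
    show ((Real.pi:ℂ)) * c * I = (Real.pi:ℂ) * I * c by ring]
  ring

lemma exp_eq_of_sub (Z W : ℂ) (n : ℤ) (h : Z = W + n * (2*(Real.pi:ℂ)*I)) :
    Complex.exp Z = Complex.exp W := by
  rw [h, Complex.exp_add, Complex.exp_int_mul_two_pi_mul_I, mul_one]

lemma two_pi_I_ne : (2*(Real.pi:ℂ)*I) ≠ 0 := by
  simp [Real.pi_ne_zero, Complex.I_ne_zero]

lemma exp_ne_exp (a b : ℝ) (h : ∀ n : ℤ, b - a ≠ (n:ℝ)) :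
    Complex.exp (-(2*(Real.pi:ℂ)*I) * a) ≠ Complex.exp (-(2*(Real.pi:ℂ)*I) * b) := by
  intro he
  rw [Complex.exp_eq_exp_iff_exists_int] at he
  obtain ⟨n, hn⟩ := he
  have h2 : ((b - a : ℝ) : ℂ) = ((n:ℤ):ℂ) := by
    apply mul_left_cancel₀ two_pi_I_ne
    push_cast
    linear_combination hn
  have : (b - a : ℝ) = (n:ℝ) := by exact_mod_cast h2
  exact h n this

lemma one_sub_exp_ne (c : ℝ) (h : Real.sin (Real.pi * c) ≠ 0) :
    (1:ℂ) - Complex.exp (-(2*(Real.pi:ℂ)*I)*c) ≠ 0 := by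
  intro h0
  have he : Complex.exp (-(2*(Real.pi:ℂ)*I)*c) = 1 := by
    have := sub_eq_zero.mp h0
    exact this.symm
  rw [Complex.exp_eq_one_iff] at he
  obtain ⟨n, hn⟩ := he
  have h2 : ((c : ℝ) : ℂ) = (((-n:ℤ)):ℂ) := by
    apply mul_left_cancel₀ two_pi_I_ne
    push_cast
    linear_combination -hn
  have hc : c = ((-n:ℤ):ℝ) := by exact_mod_cast h2
  apply h
  rw [hc, show Real.pi * ((-n:ℤ):ℝ) = ((-n:ℤ):ℝ) * Real.pi by ring]
  exact Real.sin_int_mul_pi _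

lemma int_contra (u v : ℕ) (hv : 3 ≤ v) (huv : Nat.Coprime u v) (s k : ℤ)
    (hs0 : 0 ≤ s) (hsv : s ≤ (v:ℤ) - 3) (h : (u:ℤ) * (s+1) = (v:ℤ) * k) : False := by
  have hco : IsCoprime (v:ℤ) (u:ℤ) := by
    rw [Int.isCoprime_iff_gcd_eq_one]
    simpa [Int.gcd, Nat.coprime_comm] using huv.symm
  have hdvd : (v:ℤ) ∣ (u:ℤ) * (s+1) := ⟨k, h⟩
  have hd2 : (v:ℤ) ∣ (s+1) := hco.dvd_of_dvd_mul_left hdvd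
  have := Int.le_of_dvd (by omega) hd2
  omega

/-- Proposition A.3 of Fehily–Ridout: the weighted sum of characters of the fundamental
sl₃-modules `L(m·ω₂)` evaluated at `ξ = −2πi·(u/v)·(s̄'+ρ)` equals
`(1 − e^{−2πi·v·(j'−κ)}·e^{2πi·v·j^tw(r',s')})·e^{3πi(j'−κ)}/(8·sin(πc₀)sin(πc₁)sin(πc₂))`. -/
theorem sum_of_fundamental_characters
    (u v : ℕ) (hu : 3 ≤ u) (hv : 3 ≤ v) (huv : Nat.Coprime u v)
    (r0' r1' r2' s0' s1' s2' : ℤ)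
    (hr0 : 0 ≤ r0') (hr1 : 0 ≤ r1') (hr2 : 0 ≤ r2')
    (hs0 : 0 ≤ s0') (hs1 : 0 ≤ s1') (hs2 : 0 ≤ s2')
    (hrsum : r0' + r1' + r2' = (u : ℤ) - 3) (hssum : s0' + s1' + s2' = (v : ℤ) - 3)
    (j' κ : ℝ) (hκ : κ = (u : ℝ) / (3 * (v : ℝ)) - 1 / 2)
    (ξ : ℂ × ℂ)
    (hξ : ξ = (-(2 * (Real.pi : ℂ) * Complex.I) * ((u : ℂ) / (v : ℂ))) •
      (((s1' : ℂ), (s2' : ℂ)) + rho))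
    (X1 X2 X3 x : ℂ)
    (hX1 : X1 = Complex.exp (form om2 ξ))
    (hX2 : X2 = Complex.exp (form (om1 - om2) ξ))
    (hX3 : X3 = Complex.exp (form (-om1) ξ))
    (hx : x = -Complex.exp (2 * (Real.pi : ℂ) * Complex.I *
      (form (((r1' : ℂ), (r2' : ℂ)) + rho) om2 - ((j' - κ : ℝ) : ℂ))))
    (c0 c1 c2 : ℝ)
    (hc0 : c0 = (j' - κ) - jtw u v r1' r2' s1' s2')
    (hc1 : c1 = (j' - κ) - jtw u v r0' r1' s0' s1')
    (hc2 : c2 = (j' - κ) - jtw u v r2' r0' s2' s0')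
    (hsin0 : Real.sin (Real.pi * c0) ≠ 0)
    (hsin1 : Real.sin (Real.pi * c1) ≠ 0)
    (hsin2 : Real.sin (Real.pi * c2) ≠ 0) :
    ∑ m ∈ Finset.range (v - 2), x ^ m * hsym m X1 X2 X3 =
      (1 - Complex.exp (-(2 * (Real.pi : ℂ) * Complex.I) * (v : ℂ) * ((j' - κ : ℝ) : ℂ)) *
            Complex.exp (2 * (Real.pi : ℂ) * Complex.I * (v : ℂ) *
              ((jtw u v r1' r2' s1' s2' : ℝ) : ℂ))) *
        Complex.exp (3 * (Real.pi : ℂ) * Complex.I * ((j' - κ : ℝ) : ℂ)) /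
        (8 * ((Real.sin (Real.pi * c0) : ℝ) : ℂ) * ((Real.sin (Real.pi * c1) : ℝ) : ℂ) *
          ((Real.sin (Real.pi * c2) : ℝ) : ℂ)) := by
  have hv0R : (v:ℝ) ≠ 0 := by
    have : (0:ℝ) < v := by exact_mod_cast Nat.lt_of_lt_of_le (by norm_num) hv
    exact ne_of_gt this
  have hv0C : (v:ℂ) ≠ 0 := Nat.cast_ne_zero.mpr (by omega)
  have hrR : (r0':ℝ) + (r1':ℝ) + (r2':ℝ) = (u:ℝ) - 3 := by exact_mod_cast hrsum
  have hsRR : (s0':ℝ) + (s1':ℝ) + (s2':ℝ) = (v:ℝ) - 3 := by exact_mod_cast hssum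
  have hrC : (r0':ℂ) + (r1':ℂ) + (r2':ℂ) = (u:ℂ) - 3 := by exact_mod_cast hrsum
  have hsC : (s0':ℂ) + (s1':ℂ) + (s2':ℂ) = (v:ℂ) - 3 := by exact_mod_cast hssum
  have hκv : (u:ℝ) / (3 * (v:ℝ)) = κ + 1/2 := by rw [hκ]; ring
  have hκv3 : (3*κ + 3/2) * (v:ℝ) = (u:ℝ) := by
    rw [hκ]; field_simp; ring
  -- ξ components
  have hxi1 : ξ.1 = -(2*(Real.pi:ℂ)*I) * ((u:ℂ)/(v:ℂ)) * ((s1':ℂ)+1) := by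
    rw [hξ]; simp [rho]
  have hxi2 : ξ.2 = -(2*(Real.pi:ℂ)*I) * ((u:ℂ)/(v:ℂ)) * ((s2':ℂ)+1) := by
    rw [hξ]; simp [rho]
  -- sum-of-sigmas identity in ℂ
  have hsC' : (u:ℂ)/(3*(v:ℂ)) * (((s0':ℂ)+1) + ((s1':ℂ)+1) + ((s2':ℂ)+1)) = (u:ℂ)/3 := by
    have hsv : ((s0':ℂ)+1) + ((s1':ℂ)+1) + ((s2':ℂ)+1) = (v:ℂ) := by
      linear_combination hsC
    rw [hsv]; field_simp
  have hneg : ∀ z w : ℂ, -Complex.exp z * Complex.exp w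
      = Complex.exp (z + w + (Real.pi:ℂ)*I) := by
    intro z w
    rw [Complex.exp_add, Complex.exp_add, Complex.exp_pi_mul_I]; ring
  -- the q's as exponentials
  have hq1 : x * X1 = Complex.exp (-(2*(Real.pi:ℂ)*I) * (c2:ℝ)) := by
    rw [hx, hX1, hneg]
    apply exp_eq_of_sub _ _ 1
    rw [hc2]
    simp only [form, om2, rho, jtw, Prod.fst_add, Prod.snd_add]
    rw [hxi1, hxi2]
    push_cast
    linear_combination (2*(Real.pi:ℂ)*I/3) * hrC - (2*(Real.pi:ℂ)*I) * hsC'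
  have hq2 : x * X2 = Complex.exp (-(2*(Real.pi:ℂ)*I) * (c0:ℝ)) := by
    rw [hx, hX2, hneg]
    apply exp_eq_of_sub _ _ (r2' + 2)
    rw [hc0]
    simp only [form, om1, om2, rho, jtw, Prod.fst_add, Prod.snd_add, Prod.fst_sub, Prod.snd_sub]
    rw [hxi1, hxi2]
    push_cast
    ring
  have hq3 : x * X3 = Complex.exp (-(2*(Real.pi:ℂ)*I) * (c1:ℝ)) := by
    rw [hx, hX3, hneg]
    apply exp_eq_of_sub _ _ (r1' + r2' + 3)
    rw [hc1]
    simp only [form, om1, om2, rho, jtw, Prod.fst_add, Prod.snd_add, Prod.fst_neg, Prod.snd_neg]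
    rw [hxi1, hxi2]
    push_cast
    linear_combination (-(2*(Real.pi:ℂ)*I)/3) * hrC + (2*(Real.pi:ℂ)*I) * hsC'
  -- difference identities
  have d02 : c0 - c2 = ((r2':ℝ)+1) - (3*κ+3/2)*((s2':ℝ)+1) := by
    rw [hc0, hc2]
    simp only [jtw]
    rw [hκv]
    linear_combination (-(1:ℝ)/3) * hrR + (κ + 1/2) * hsRR + (1/3:ℝ) * hκv3
  have d01 : c0 - c1 = (3*κ+3/2)*((s1':ℝ)+1) - ((r1':ℝ)+1) := by
    rw [hc0, hc1]
    simp only [jtw]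
    rw [hκv]
    linear_combination ((1:ℝ)/3) * hrR - (κ + 1/2) * hsRR - (1/3:ℝ) * hκv3
  have d12 : c1 - c2 = (3*κ+3/2)*((s0':ℝ)+1) - ((r0':ℝ)+1) := by
    rw [hc1, hc2]
    simp only [jtw]
    rw [hκv]
    linear_combination ((1:ℝ)/3) * hrR - (κ + 1/2) * hsRR - (1/3:ℝ) * hκv3
  have hsumc : c0 + c1 + c2 = 3*(j'-κ) + 3/2 := by
    rw [hc0, hc1, hc2]; simp only [jtw]; ring
  -- common v-th power
  set PP : ℂ := Complex.exp (-(2 * (Real.pi : ℂ) * Complex.I) * (v : ℂ) * ((j' - κ : ℝ) : ℂ)) *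
      Complex.exp (2 * (Real.pi : ℂ) * Complex.I * (v : ℂ) *
        ((jtw u v r1' r2' s1' s2' : ℝ) : ℂ)) with hPP
  have hbase2 : Complex.exp ((v:ℂ) * (-(2*(Real.pi:ℂ)*I) * (c0:ℝ))) = PP := by
    rw [hPP, ← Complex.exp_add]
    congr 1
    rw [hc0]
    push_cast
    ring
  have hpow : ∀ (c : ℝ) (n : ℤ), ((v:ℝ)*c0 - (v:ℝ)*c = (n:ℝ)) →
      Complex.exp (-(2*(Real.pi:ℂ)*I) * (c:ℝ)) ^ v = PP := by
    intro c n h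
    rw [← Complex.exp_nat_mul]
    have hC : ((v:ℝ)*c0 - (v:ℝ)*c : ℝ) = ((n:ℤ):ℝ) := h
    have hCc := congrArg (Complex.ofReal) hC
    push_cast at hCc
    refine Eq.trans (exp_eq_of_sub _ ((v:ℂ) * (-(2*(Real.pi:ℂ)*I) * (c0:ℝ))) n ?_) hbase2
    push_cast
    linear_combination (2*(Real.pi:ℂ)*I) * hCc
  have hp2 : Complex.exp (-(2*(Real.pi:ℂ)*I) * (c0:ℝ)) ^ v = PP := by
    apply hpow c0 0; push_cast; ring
  have hp1 : Complex.exp (-(2*(Real.pi:ℂ)*I) * (c2:ℝ)) ^ v = PP := by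
    apply hpow c2 ((v:ℤ)*(r2'+1) - (u:ℤ)*(s2'+1))
    push_cast
    linear_combination (v:ℝ) * d02 - ((s2':ℝ)+1) * hκv3
  have hp3 : Complex.exp (-(2*(Real.pi:ℂ)*I) * (c1:ℝ)) ^ v = PP := by
    apply hpow c1 ((u:ℤ)*(s1'+1) - (v:ℤ)*(r1'+1))
    push_cast
    linear_combination (v:ℝ) * d01 + ((s1':ℝ)+1) * hκv3
  -- pairwise distinctness
  have hs2b : s2' ≤ (v:ℤ) - 3 := by omega
  have hs1b : s1' ≤ (v:ℤ) - 3 := by omega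
  have hs0b : s0' ≤ (v:ℤ) - 3 := by omega
  have hne12 : Complex.exp (-(2*(Real.pi:ℂ)*I) * (c2:ℝ)) ≠
      Complex.exp (-(2*(Real.pi:ℂ)*I) * (c0:ℝ)) := by
    apply exp_ne_exp
    intro n hn
    have heq : ((r2':ℝ)+1) - (3*κ+3/2)*((s2':ℝ)+1) = (n:ℝ) := d02.symm.trans hn
    have hRint : (u:ℤ)*(s2'+1) = (v:ℤ)*((r2'+1) - n) := by
      have : (u:ℝ)*((s2':ℝ)+1) = (v:ℝ)*(((r2':ℝ)+1) - (n:ℝ)) := by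
        linear_combination (-(v:ℝ)) * heq - ((s2':ℝ)+1) * hκv3
      exact_mod_cast this
    exact int_contra u v hv huv s2' _ hs2 hs2b hRint
  have hne13 : Complex.exp (-(2*(Real.pi:ℂ)*I) * (c2:ℝ)) ≠
      Complex.exp (-(2*(Real.pi:ℂ)*I) * (c1:ℝ)) := by
    apply exp_ne_exp
    intro n hn
    have heq : (3*κ+3/2)*((s0':ℝ)+1) - ((r0':ℝ)+1) = (n:ℝ) := d12.symm.trans hn
    have hRint : (u:ℤ)*(s0'+1) = (v:ℤ)*((r0'+1) + n) := by
      have : (u:ℝ)*((s0':ℝ)+1) = (v:ℝ)*(((r0':ℝ)+1) + (n:ℝ)) := by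
        linear_combination ((v:ℝ)) * heq - ((s0':ℝ)+1) * hκv3
      exact_mod_cast this
    exact int_contra u v hv huv s0' _ hs0 hs0b hRint
  have hne23 : Complex.exp (-(2*(Real.pi:ℂ)*I) * (c0:ℝ)) ≠
      Complex.exp (-(2*(Real.pi:ℂ)*I) * (c1:ℝ)) := by
    apply exp_ne_exp
    intro n hn
    have hn' : c0 - c1 = (-n:ℝ) := by push_cast; linarith [hn]
    have heq : (3*κ+3/2)*((s1':ℝ)+1) - ((r1':ℝ)+1) = (-n:ℝ) := d01.symm.trans hn'
    have hRint : (u:ℤ)*(s1'+1) = (v:ℤ)*((r1'+1) - n) := by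
      have : (u:ℝ)*((s1':ℝ)+1) = (v:ℝ)*(((r1':ℝ)+1) - (n:ℝ)) := by
        linear_combination ((v:ℝ)) * heq - ((s1':ℝ)+1) * hκv3
      exact_mod_cast this
    exact int_contra u v hv huv s1' _ hs1 hs1b hRint
  -- nonvanishing of 1 - q
  have e1 := one_sub_exp_ne c2 hsin2
  have e2 := one_sub_exp_ne c0 hsin0
  have e3 := one_sub_exp_ne c1 hsin1
  -- the sine product
  have hD : ((1:ℂ) - Complex.exp (-(2*(Real.pi:ℂ)*I) * (c2:ℝ))) *
      (1 - Complex.exp (-(2*(Real.pi:ℂ)*I) * (c0:ℝ))) *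
      (1 - Complex.exp (-(2*(Real.pi:ℂ)*I) * (c1:ℝ))) ≠ 0 :=
    mul_ne_zero (mul_ne_zero e1 e2) e3
  have h12I : Complex.exp ((Real.pi:ℂ)/2*I) = I := by
    rw [Complex.exp_mul_I]
    rw [show ((Real.pi:ℂ)/2) = ((Real.pi/2 : ℝ):ℂ) by push_cast; ring]
    rw [← Complex.ofReal_cos, ← Complex.ofReal_sin]
    simp [Real.cos_pi_div_two, Real.sin_pi_div_two]
  have hsC2 : ((c0:ℂ)) + (c1:ℂ) + (c2:ℂ) = 3*((j'-κ:ℝ):ℂ) + 3/2 := by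
    have := congrArg (Complex.ofReal) hsumc
    push_cast at this ⊢
    linear_combination this
  have hF : Complex.exp ((Real.pi:ℂ)*I*(c0:ℝ)) * Complex.exp ((Real.pi:ℂ)*I*(c1:ℝ)) *
      Complex.exp ((Real.pi:ℂ)*I*(c2:ℝ))
      = -I * Complex.exp (3*(Real.pi:ℂ)*I*((j'-κ:ℝ):ℂ)) := by
    rw [← Complex.exp_add, ← Complex.exp_add]
    rw [show (Real.pi:ℂ)*I*(c0:ℝ) + (Real.pi:ℂ)*I*(c1:ℝ) + (Real.pi:ℂ)*I*(c2:ℝ)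
        = 3*(Real.pi:ℂ)*I*((j'-κ:ℝ):ℂ) + (Real.pi:ℂ)*I + (Real.pi:ℂ)/2*I from by
      linear_combination ((Real.pi:ℂ)*I) * hsC2]
    rw [Complex.exp_add, Complex.exp_add, Complex.exp_pi_mul_I, h12I]
    ring
  have hsinprod : 8 * ((Real.sin (Real.pi * c0) : ℝ) : ℂ) * ((Real.sin (Real.pi * c1) : ℝ) : ℂ) *
      ((Real.sin (Real.pi * c2) : ℝ) : ℂ)
      = Complex.exp (3 * (Real.pi:ℂ) * I * ((j' - κ : ℝ):ℂ)) *
        (((1:ℂ) - Complex.exp (-(2*(Real.pi:ℂ)*I) * (c2:ℝ))) *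
          (1 - Complex.exp (-(2*(Real.pi:ℂ)*I) * (c0:ℝ))) *
          (1 - Complex.exp (-(2*(Real.pi:ℂ)*I) * (c1:ℝ)))) := by
    rw [sin_fac c0, sin_fac c1, sin_fac c2]
    linear_combination (-I*(Complex.exp (-(2*(Real.pi:ℂ)*I) * (c0:ℝ)) - 1) *
        (Complex.exp (-(2*(Real.pi:ℂ)*I) * (c1:ℝ)) - 1) *
        (Complex.exp (-(2*(Real.pi:ℂ)*I) * (c2:ℝ)) - 1)) * hF +
      (I*(Complex.exp (-(2*(Real.pi:ℂ)*I) * (c0:ℝ)) - 1) *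
        (Complex.exp (-(2*(Real.pi:ℂ)*I) * (c1:ℝ)) - 1) *
        (Complex.exp (-(2*(Real.pi:ℂ)*I) * (c2:ℝ)) - 1) *
        (Complex.exp ((Real.pi:ℂ)*I*(c0:ℝ)) * Complex.exp ((Real.pi:ℂ)*I*(c1:ℝ)) *
          Complex.exp ((Real.pi:ℂ)*I*(c2:ℝ))) +
       Complex.exp (3*(Real.pi:ℂ)*I*((j'-κ:ℝ):ℂ)) *
        ((Complex.exp (-(2*(Real.pi:ℂ)*I) * (c0:ℝ)) - 1) *
         (Complex.exp (-(2*(Real.pi:ℂ)*I) * (c1:ℝ)) - 1) *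
         (Complex.exp (-(2*(Real.pi:ℂ)*I) * (c2:ℝ)) - 1))) * Complex.I_sq
  -- assemble
  have hLHS : ∑ m ∈ Finset.range (v - 2), x ^ m * hsym m X1 X2 X3
      = (1 - PP) / (((1:ℂ) - Complex.exp (-(2*(Real.pi:ℂ)*I) * (c2:ℝ))) *
          (1 - Complex.exp (-(2*(Real.pi:ℂ)*I) * (c0:ℝ))) *
          (1 - Complex.exp (-(2*(Real.pi:ℂ)*I) * (c1:ℝ)))) := by
    have hvrange : v - 2 = (v - 3) + 1 := by omega
    have hv3 : (v - 3) + 3 = v := by omega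
    rw [hvrange]
    rw [Finset.sum_congr rfl (fun m _ => hsym_smul m x X1 X2 X3)]
    rw [show (∑ m ∈ Finset.range ((v-3) + 1), hsym m (x*X1) (x*X2) (x*X3))
        = ∑ m ∈ Finset.range ((v-3) + 1), hsym m (Complex.exp (-(2*(Real.pi:ℂ)*I) * (c2:ℝ)))
          (Complex.exp (-(2*(Real.pi:ℂ)*I) * (c0:ℝ)))
          (Complex.exp (-(2*(Real.pi:ℂ)*I) * (c1:ℝ))) from by rw [hq1, hq2, hq3]]
    exact sum_hsym_eq (v-3) _ _ _ PP (by rw [hv3]; exact hp1) (by rw [hv3]; exact hp2)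
      (by rw [hv3]; exact hp3) hne12 hne13 hne23 e1 e2 e3
  rw [hLHS, hsinprod]
  rw [div_eq_div_iff hD (mul_ne_zero (Complex.exp_ne_zero _) hD)]
  ring
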